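/- Let R be a commutative ring and A, B, C, D be m×m matrices over R such that AB = BA, BC = CB, and AD = DA. Then the determinant of the block matrix [[A, B], [C, D]] equals det(DA − BC). -/
import Mathlib

open Matrix Polynomial

/-- Silvester: if C and D commute, det [[A,B],[C,D]] = det (AD - BC). -/
theorem det_fromBlocks_of_comm_CD {R : Type*} [CommRing R] {m : ℕ}
    (A B C D : Matrix (Fin m) (Fin m) R) (h : C * D = D * C) :
    (Matrix.fromBlocks A B C D).det = (A * D - B * C).det := by
  let f : R →+* R[X] := Polynomial.C
  let A' := A.map f
  let B' := B.map f
  let C' := C.map f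
  let D' : Matrix (Fin m) (Fin m) R[X] := D.map f + (Polynomial.X : R[X]) • (1 : Matrix (Fin m) (Fin m) R[X])
  have hcomm : C' * D' = D' * C' := by
    simp only [D', Matrix.mul_add, Matrix.add_mul, Matrix.mul_smul, Matrix.smul_mul,
      Matrix.mul_one, Matrix.one_mul, A', B', C', ← Matrix.map_mul, h]
  have key : (fromBlocks A' B' C' D') * (fromBlocks D' 0 (-C') 1) =
      fromBlocks (A' * D' - B' * C') B' 0 D' := by
    rw [Matrix.fromBlocks_multiply]
    simp [Matrix.mul_neg, sub_eq_add_neg, hcomm]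
  have hdet : (fromBlocks A' B' C' D').det * D'.det = (A' * D' - B' * C').det * D'.det := by
    have := congrArg Matrix.det key
    rwa [Matrix.det_mul, Matrix.det_fromBlocks_zero₁₂, Matrix.det_one, mul_one,
      Matrix.det_fromBlocks_zero₂₁] at this
  have hD'char : D' = Matrix.charmatrix (-D) := by
    ext i j
    by_cases hij : i = j
    · subst hij
      simp [D', f, Matrix.charmatrix_apply_eq, Matrix.one_apply, sub_eq_add_neg, add_comm]
    · simp [D', f, Matrix.charmatrix_apply_ne _ _ _ hij, Matrix.one_apply, hij]
  have hmonic : D'.det.Monic := by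
    rw [hD'char]
    exact Matrix.charpoly_monic (-D)
  have hcancel : (fromBlocks A' B' C' D').det = (A' * D' - B' * C').det :=
    hmonic.isRegular.right hdet
  have this1 := congrArg (Polynomial.evalRingHom 0) hcancel
  rw [RingHom.map_det, RingHom.map_det] at this1
  simp only [RingHom.mapMatrix_apply] at this1
  have hmap : ∀ M : Matrix (Fin m) (Fin m) R, (M.map f).map (Polynomial.evalRingHom 0) = M := by
    intro M
    ext i j
    simp [f]
  have hD'0 : D'.map (Polynomial.evalRingHom 0) = D := by
    ext i j
    by_cases hij : i = j <;> simp [D', f, Matrix.one_apply, hij]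
  rw [Matrix.fromBlocks_map, hmap, hmap, hmap, hD'0, Matrix.map_sub _ (fun a b => map_sub (Polynomial.evalRingHom 0) a b), Matrix.map_mul,
    Matrix.map_mul, hmap, hmap, hmap, hD'0] at this1
  exact this1

theorem det_fromBlocks_of_comm_AB_BC_AD {R : Type*} [CommRing R] {m : ℕ}
    (A B C D : Matrix (Fin m) (Fin m) R) (h1 : A * B = B * A) (h2 : B * C = C * B) (h3 : A * D = D * A) :
    (Matrix.fromBlocks A B C D).det = (D * A - B * C).det := by
  have hswap : (Matrix.fromBlocks A B C D).det = (Matrix.fromBlocks D C B A).det := by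
    have e := Matrix.det_submatrix_equiv_self (Equiv.sumComm (Fin m) (Fin m))
      (Matrix.fromBlocks A B C D)
    rw [← e]
    congr 1
    rw [show (⇑(Equiv.sumComm (Fin m) (Fin m))) = Sum.swap from rfl]
    exact Matrix.fromBlocks_submatrix_sum_swap_sum_swap A B C D
  rw [hswap, det_fromBlocks_of_comm_CD D C B A h1.symm, h2]
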